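/- For integers d ≥ 1, the sum over m from 1 to d of q^{binomial(m,2)} * (1-q^m) * qbinom(2d, d+m) equals (1-q^d)/(1+q^d) * qbinom(2d, d), as an identity of rational functions in q. -/

import Mathlib

open Finset

/-- `(q;q)_n = ∏_{i=1}^n (1 - q^i)` as a formal power series over `ℚ`. -/
noncomputable def qp (n : ℕ) : PowerSeries ℚ :=
  ∏ i ∈ Finset.range n, (1 - (PowerSeries.X : PowerSeries ℚ) ^ (i + 1))

/-- The Gaussian binomial coefficient `qbinom(n,k)`. -/
noncomputable def qbin (n k : ℕ) : PowerSeries ℚ :=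
  if k ≤ n then qp n * (qp k * qp (n - k))⁻¹ else 0

lemma qp_cc (n : ℕ) : PowerSeries.constantCoeff (R := ℚ) (qp n) = 1 := by
  simp [qp, map_prod]

lemma qp_ne_zero (n : ℕ) : qp n ≠ 0 := by
  intro h
  have := qp_cc n
  rw [h] at this
  simp at this

lemma qp_succ (n : ℕ) : qp (n + 1) = qp n * (1 - (PowerSeries.X : PowerSeries ℚ) ^ (n + 1)) := by
  rw [qp, qp, Finset.prod_range_succ]

/-- Pascal-type ratio: `(1 - q^(k+1)) qbin n (k+1) = (1 - q^(n-k)) qbin n k` for `k < n`. -/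
lemma qbin_step {n k : ℕ} (hk : k < n) :
    (1 - (PowerSeries.X : PowerSeries ℚ) ^ (k + 1)) * qbin n (k + 1)
      = (1 - (PowerSeries.X : PowerSeries ℚ) ^ (n - k)) * qbin n k := by
  have hk1 : k + 1 ≤ n := hk
  have hkn : k ≤ n := hk.le
  rw [qbin, qbin, if_pos hk1, if_pos hkn]
  have hC : qp (k + 1) * qp (n - (k + 1)) * (qp k * qp (n - k)) ≠ 0 :=
    mul_ne_zero (mul_ne_zero (qp_ne_zero _) (qp_ne_zero _))
      (mul_ne_zero (qp_ne_zero _) (qp_ne_zero _))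
  apply mul_right_cancel₀ hC
  have e1 : (qp (k + 1) * qp (n - (k + 1)))⁻¹ * (qp (k + 1) * qp (n - (k + 1))) = 1 := by
    apply PowerSeries.inv_mul_cancel
    simp [map_mul, qp_cc]
  have e2 : (qp k * qp (n - k))⁻¹ * (qp k * qp (n - k)) = 1 := by
    apply PowerSeries.inv_mul_cancel
    simp [map_mul, qp_cc]
  have hqk : qp (k + 1) = qp k * (1 - (PowerSeries.X : PowerSeries ℚ) ^ (k + 1)) := qp_succ k
  have hnk : n - k = (n - (k + 1)) + 1 := by omega
  have hqnk : qp (n - k)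
      = qp (n - (k + 1)) * (1 - (PowerSeries.X : PowerSeries ℚ) ^ (n - k)) := by
    rw [hnk, qp_succ, ← hnk]
  calc (1 - (PowerSeries.X : PowerSeries ℚ) ^ (k + 1)) * (qp n * (qp (k + 1) * qp (n - (k + 1)))⁻¹)
        * (qp (k + 1) * qp (n - (k + 1)) * (qp k * qp (n - k)))
      = (1 - (PowerSeries.X : PowerSeries ℚ) ^ (k + 1)) * qp n
          * ((qp (k + 1) * qp (n - (k + 1)))⁻¹ * (qp (k + 1) * qp (n - (k + 1))))
          * (qp k * qp (n - k)) := by ring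
    _ = (1 - (PowerSeries.X : PowerSeries ℚ) ^ (k + 1)) * qp n * (qp k * qp (n - k)) := by
        rw [e1]; ring
    _ = (1 - (PowerSeries.X : PowerSeries ℚ) ^ (n - k)) * qp n
          * ((qp k * qp (n - k))⁻¹ * (qp k * qp (n - k)))
          * (qp (k + 1) * qp (n - (k + 1))) := by
        rw [e2, hqk, hqnk]; ring
    _ = (1 - (PowerSeries.X : PowerSeries ℚ) ^ (n - k)) * (qp n * (qp k * qp (n - k))⁻¹)
          * (qp (k + 1) * qp (n - (k + 1)) * (qp k * qp (n - k))) := by ring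

/-- Extended to `m ≤ d` (both sides vanish at `m = d`). -/
lemma qbin_step' {d m : ℕ} (hd : 1 ≤ d) (hm : m ≤ d) :
    (1 - (PowerSeries.X : PowerSeries ℚ) ^ (d + m + 1)) * qbin (2 * d) (d + m + 1)
      = (1 - (PowerSeries.X : PowerSeries ℚ) ^ (d - m)) * qbin (2 * d) (d + m) := by
  rcases eq_or_lt_of_le hm with h | hlt
  · subst h
    rw [qbin, if_neg (by omega : ¬ (m + m + 1 ≤ 2 * m))]
    simp [Nat.sub_self]
  · rw [qbin_step (by omega : d + m < 2 * d),
      show 2 * d - (d + m) = d - m from by omega]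

lemma tele (g : ℕ → PowerSeries ℚ) (d : ℕ) :
    ∑ m ∈ Finset.Icc 1 d, (g m - g (m + 1)) = g 1 - g (d + 1) := by
  induction d with
  | zero => simp
  | succ n ih =>
    rcases Nat.eq_zero_or_pos n with rfl | hn
    · simp
    · rw [Finset.sum_Icc_succ_top (by omega), ih]
      ring

/-- `Σ_{m=1}^{d} q^{C(m,2)} (1-q^m) qbinom(2d, d+m) = (1-q^d)/(1+q^d) qbinom(2d, d)`. -/
theorem stmt_1 (d : ℕ) (hd : 1 ≤ d) :
    ∑ m ∈ Finset.Icc 1 d,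
        (PowerSeries.X : PowerSeries ℚ) ^ (m.choose 2) * (1 - PowerSeries.X ^ m)
          * qbin (2 * d) (d + m)
      = (1 - PowerSeries.X ^ d) * (1 + PowerSeries.X ^ d)⁻¹ * qbin (2 * d) d := by
  set X : PowerSeries ℚ := PowerSeries.X with hX
  have hdcc : PowerSeries.constantCoeff (R := ℚ) (1 + X ^ d) = 1 := by
    simp [hX, zero_pow (by omega : d ≠ 0)]
  have hU : (1 + X ^ d) ≠ 0 := by
    intro h; rw [h] at hdcc; simp at hdcc
  have hinv : (1 + X ^ d) * (1 + X ^ d)⁻¹ = 1 :=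
    PowerSeries.mul_inv_cancel _ (by rw [hdcc]; exact one_ne_zero)
  apply mul_left_cancel₀ hU
  have key : (1 + X ^ d) * ((1 - X ^ d) * (1 + X ^ d)⁻¹ * qbin (2 * d) d)
      = (1 - X ^ d) * qbin (2 * d) d := by
    calc (1 + X ^ d) * ((1 - X ^ d) * (1 + X ^ d)⁻¹ * qbin (2 * d) d)
        = ((1 + X ^ d) * (1 + X ^ d)⁻¹) * ((1 - X ^ d) * qbin (2 * d) d) := by ring
      _ = (1 - X ^ d) * qbin (2 * d) d := by rw [hinv]; ring
  rw [key, Finset.mul_sum]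
  set g : ℕ → PowerSeries ℚ := fun m =>
    X ^ (m.choose 2) * (1 - X ^ (d + m)) * qbin (2 * d) (d + m) with hg
  have hterm : ∀ m ∈ Finset.Icc 1 d,
      (1 + X ^ d) * (X ^ (m.choose 2) * (1 - X ^ m) * qbin (2 * d) (d + m))
        = g m - g (m + 1) := by
    intro m hmem
    rw [Finset.mem_Icc] at hmem
    have hm : m ≤ d := hmem.2
    have hstep := qbin_step' hd hm
    rw [← hX] at hstep
    have hch : (m + 1).choose 2 = m.choose 2 + m := by
      have h2 : (m + 1).choose 2 = m.choose 1 + m.choose 2 := Nat.choose_succ_succ m 1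
      rw [h2, Nat.choose_one_right, Nat.add_comm]
    have hda : d + (m + 1) = d + m + 1 := by omega
    rw [hg]
    simp only [hda, hch]
    rw [mul_assoc (X ^ (m.choose 2 + m)), hstep]
    have hXd : X ^ d = X ^ m * X ^ (d - m) := by
      rw [← pow_add]
      congr 1
      omega
    have hXdm : X ^ (d + m) = X ^ d * X ^ m := by rw [← pow_add]
    rw [pow_add X (m.choose 2) m, hXdm, hXd]
    ring
  rw [Finset.sum_congr rfl hterm, tele g d]
  have hg1 : g 1 = (1 - X ^ d) * qbin (2 * d) d := by
    have h0 := qbin_step' hd (Nat.zero_le d)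
    rw [← hX] at h0
    simp only [Nat.add_zero, Nat.sub_zero] at h0
    rw [hg]
    simp only []
    rw [show (1 : ℕ).choose 2 = 0 from rfl, pow_zero, one_mul]
    exact h0
  have hgd : g (d + 1) = 0 := by
    rw [hg]
    simp only [qbin, if_neg (by omega : ¬ (d + (d + 1) ≤ 2 * d))]
    ring
  rw [hg1, hgd, sub_zero]
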